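/- With σ_θ as above and Ψ_θ := (1 + σ_θ)/2, the map Ψ_θ is an idempotent on the two-tensors commuting with the deformed dagger, and Ψ_θ = T_θ ∘ Ψ ∘ T_θ^{−1}, where Ψ = (1+σ)/2, σ is the ordinary flip composed with no phase (σ(ω⊗η) = η⊗ω) and T_θ(ω⊗η) = λ^{−n₂(ω)n₁(η)} ω ⊗_θ η. -/

import Mathlib

/-- With `σ_θ(ω⊗η) = Θ(ω,η)η⊗ω` and `Ψ_θ = (1+σ_θ)/2`, the map `Ψ_θ` is an
idempotent on the deformed two-tensors commuting with the deformed dagger, and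
`Ψ_θ = T_θ ∘ Ψ ∘ T_θ⁻¹` where `Ψ = (1+σ)/2`, `σ` the ordinary flip, and
`T_θ(ω⊗η) = λ^{−n₂(ω)n₁(η)} ω⊗_θη` (stated as `Ψ_θ ∘ T_θ = T_θ ∘ Ψ` on generators). -/
theorem stmt_12 {Ω T Tθ : Type*}
    [AddCommGroup Ω] [Module ℂ Ω] [AddCommGroup T] [Module ℂ T] [AddCommGroup Tθ] [Module ℂ Tθ]
    (l : ℂ) (hl : ‖l‖ = 1)
    (Gr : ℤ × ℤ → Submodule ℂ Ω)
    (starΩ : Ω → Ω)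
    (hstarGr : ∀ n : ℤ × ℤ, ∀ ω ∈ Gr n, starΩ ω ∈ Gr (-n))
    (t : Ω → Ω → T) (tθ : Ω → Ω → Tθ)
    (Tmap : T → Tθ)
    (hTmap_add : ∀ v w : T, Tmap (v + w) = Tmap v + Tmap w)
    (hTmap_s : ∀ (c : ℂ) (v : T), Tmap (c • v) = c • Tmap v)
    (hTmap_t : ∀ (m n : ℤ × ℤ) (ω η : Ω), ω ∈ Gr m → η ∈ Gr n →
      Tmap (t ω η) = l ^ (-(m.2 * n.1)) • tθ ω η)
    (σ : T → T) (hσ_t : ∀ ω η : Ω, σ (t ω η) = t η ω)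
    (σθ : Tθ → Tθ)
    (hσθ_add : ∀ v w : Tθ, σθ (v + w) = σθ v + σθ w)
    (hσθ_s : ∀ (c : ℂ) (v : Tθ), σθ (c • v) = c • σθ v)
    (hσθ_t : ∀ (m n : ℤ × ℤ) (ω η : Ω), ω ∈ Gr m → η ∈ Gr n →
      σθ (tθ ω η) = l ^ (m.2 * n.1 - n.2 * m.1) • tθ η ω)
    (dagθ : Tθ → Tθ)
    (hdagθ_add : ∀ v w : Tθ, dagθ (v + w) = dagθ v + dagθ w)
    (hdagθ_s : ∀ (c : ℂ) (v : Tθ), dagθ (c • v) = (starRingEnd ℂ) c • dagθ v)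
    (hdagθ_t : ∀ (m n : ℤ × ℤ) (ω η : Ω), ω ∈ Gr m → η ∈ Gr n →
      dagθ (tθ ω η) = l ^ (n.1 * n.2) • l ^ (m.1 * m.2) • tθ (starΩ η) (starΩ ω))
    (Ψ : T → T) (hΨ : ∀ v : T, Ψ v = (2⁻¹ : ℂ) • (v + σ v))
    (Ψθ : Tθ → Tθ) (hΨθ : ∀ v : Tθ, Ψθ v = (2⁻¹ : ℂ) • (v + σθ v)) :
    ∀ (m n : ℤ × ℤ) (ω η : Ω), ω ∈ Gr m → η ∈ Gr n →
      (Ψθ (Ψθ (tθ ω η)) = Ψθ (tθ ω η)) ∧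
      (dagθ (Ψθ (tθ ω η)) = Ψθ (dagθ (tθ ω η))) ∧
      (Ψθ (Tmap (t ω η)) = Tmap (Ψ (t ω η))) := by
  intro m n ω η hω hη
  have hl0 : l ≠ 0 := by
    intro h; rw [h] at hl; simp at hl
  have hconj : ∀ k : ℤ, (starRingEnd ℂ) (l ^ k) = l ^ (-k) := by
    intro k
    have hinv : (starRingEnd ℂ) l = l⁻¹ := by
      have := Complex.mul_conj l
      field_simp [Complex.normSq_eq_norm_sq, hl] at this ⊢
      rw [this, Complex.normSq_eq_norm_sq, hl]; norm_num
    rw [map_zpow₀, hinv, inv_zpow, zpow_neg]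
  -- key: σθ ∘ σθ = id on tθ ω η
  have hσσ : σθ (σθ (tθ ω η)) = tθ ω η := by
    rw [hσθ_t m n ω η hω hη, hσθ_s, hσθ_t n m η ω hη hω, smul_smul,
      ← zpow_add₀ hl0]
    norm_num
  refine ⟨?_, ?_, ?_⟩
  · rw [hΨθ (tθ ω η), hΨθ, hσθ_s, hσθ_add, hσσ, smul_add, smul_smul]
    module
  · have key : dagθ (σθ (tθ ω η)) = σθ (dagθ (tθ ω η)) := by
      rw [hσθ_t m n ω η hω hη, hdagθ_s, hdagθ_t n m η ω hη hω,
        hdagθ_t m n ω η hω hη, hσθ_s, hσθ_s,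
        hσθ_t (-n) (-m) _ _ (hstarGr n η hη) (hstarGr m ω hω), hconj,
        smul_smul, smul_smul, smul_smul, smul_smul, ← zpow_add₀ hl0,
        ← zpow_add₀ hl0, ← zpow_add₀ hl0, ← zpow_add₀ hl0]
      rw [show -(m.2 * n.1 - n.2 * m.1) + m.1 * m.2 + n.1 * n.2 =
        n.1 * n.2 + m.1 * m.2 + ((-n).2 * (-m).1 - (-m).2 * (-n).1) by
          simp only [Prod.fst_neg, Prod.snd_neg]; ring]
    rw [hΨθ (tθ ω η), hdagθ_s, hdagθ_add, hΨθ, key,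
      show ((starRingEnd ℂ) 2⁻¹) = (2⁻¹ : ℂ) by rw [map_inv₀, map_ofNat]]
  · rw [hTmap_t m n ω η hω hη, hΨθ, hσθ_s, hσθ_t m n ω η hω hη, hΨ,
      hTmap_s, hTmap_add, hσ_t, hTmap_t m n ω η hω hη, hTmap_t n m η ω hη hω,
      smul_smul, ← zpow_add₀ hl0,
      show -(m.2 * n.1) + (m.2 * n.1 - n.2 * m.1) = -(n.2 * m.1) by ring]
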